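/- Let n_1,…,n_r, r, s be positive integers with 3 ≤ n_1 ≤ … ≤ n_r and r > s. Then R_{r,s}(K_{1,n_1},…,K_{1,n_r}) ≤ ⌈(n_1 + n_2 + … + n_r − r + 1)/s⌉ + 1. -/

import Mathlib

open SimpleGraph Finset

/-- `K_N` (with vertices `Fin N`) colored by `χ` contains a copy of `H` all of
whose edges' color sets contain the color element `i`. -/
def MonoCopy {W : Type} (H : SimpleGraph W) {N r : ℕ}
    (χ : Sym2 (Fin N) → Finset (Fin r)) (i : Fin r) : Prop :=
  ∃ f : W → Fin N, Function.Injective f ∧ ∀ u v, H.Adj u v → i ∈ χ s(f u, f v)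

/-- Every `(r,s)`-coloring of the edges of `K_N` (each edge gets an `s`-element
subset of `Fin r`) yields, for some `i`, a copy of `G i` monochromatic with
color element `i`. -/
def SetRamseyProp {r : ℕ} (s : ℕ) {V : Fin r → Type} (G : ∀ i, SimpleGraph (V i))
    (N : ℕ) : Prop :=
  ∀ χ : Sym2 (Fin N) → Finset (Fin r),
    (∀ e : Sym2 (Fin N), ¬ e.IsDiag → (χ e).card = s) →
    ∃ i, MonoCopy (G i) χ i

/-- The set-coloring Ramsey number `R_{r,s}(G₁,…,G_r)`. -/
noncomputable def setRamsey {r : ℕ} (s : ℕ) {V : Fin r → Type}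
    (G : ∀ i, SimpleGraph (V i)) : ℕ :=
  sInf {N | SetRamseyProp s G N}

/-- `R_{r,s}(K_{1,n₁},…,K_{1,n_r}) ≤ ⌈(n₁ + ⋯ + n_r − r + 1)/s⌉ + 1` for
`r > s ≥ 1` and `3 ≤ n₁ ≤ … ≤ n_r`. Here `K_{1,m}` is realized as the
complete bipartite graph with parts `Unit` and `Fin m`. -/
theorem setRamsey_stars_upper (r s : ℕ) (hs : 0 < s) (hrs : s < r)
    (n : Fin r → ℕ) (hn : ∀ i, 3 ≤ n i) (hmono : Monotone n) :
    (setRamsey s (fun i => completeBipartiteGraph Unit (Fin (n i))) : ℤ)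
      ≤ ⌈((∑ i, (n i : ℚ)) - r + 1) / s⌉ + 1 := by
  set c : ℤ := ⌈((∑ i, (n i : ℚ)) - r + 1) / s⌉ with hcdef
  have hr : 0 < r := lt_trans hs hrs
  have hsQ : (0:ℚ) < s := by exact_mod_cast hs
  have hnum : (0:ℚ) < (∑ i, (n i : ℚ)) - r + 1 := by
    have h3 : (r:ℚ) ≤ ∑ i, (n i : ℚ) := by
      calc (r:ℚ) = ∑ _i : Fin r, (1:ℚ) := by simp
        _ ≤ ∑ i, (n i : ℚ) := Finset.sum_le_sum fun i _ => by
            have h := hn i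
            have : 1 ≤ n i := by omega
            exact_mod_cast this
    linarith
  have hc1 : 1 ≤ c := by
    have : (0:ℤ) < c := Int.ceil_pos.mpr (div_pos hnum hsQ)
    omega
  set M : ℕ := c.toNat + 1 with hMdef
  have hMc : (M : ℤ) = c + 1 := by
    simp [hMdef, Int.toNat_of_nonneg (by omega : (0:ℤ) ≤ c)]
  -- key integer inequality : s * c ≥ ∑ n i - r + 1
  have hkey : (∑ i, (n i : ℤ)) - r + 1 ≤ s * c := by
    have h1 : ((∑ i, (n i : ℚ)) - r + 1) / s ≤ (c : ℚ) := Int.le_ceil _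
    have h2 : (∑ i, (n i : ℚ)) - r + 1 ≤ (c : ℚ) * s := (div_le_iff₀ hsQ).mp h1
    have : ((∑ i, (n i : ℤ)) - r + 1 : ℚ) ≤ ((s * c : ℤ) : ℚ) := by
      push_cast
      linarith
    exact_mod_cast this
  have hprop : SetRamseyProp s (fun i => completeBipartiteGraph Unit (Fin (n i))) M := by
    intro χ hχ
    have hM2 : 2 ≤ M := by omega
    haveI : NeZero M := ⟨by omega⟩
    set B : Finset (Fin M) := Finset.univ.erase 0 with hBdef
    have hBcard : B.card = M - 1 := by
      simp [hBdef, Finset.card_erase_of_mem, Finset.card_univ]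
    set A : Fin r → Finset (Fin M) := fun i => B.filter (fun u => i ∈ χ s(0, u)) with hAdef
    have hedge : ∀ u ∈ B, (χ s((0 : Fin M), u)).card = s := by
      intro u hu
      apply hχ
      simp only [Sym2.isDiag_iff_proj_eq]
      intro h
      exact (Finset.mem_erase.mp hu).1 h.symm
    have hcount : ∑ i, (A i).card = s * (M - 1) := by
      have h1 : ∀ i, (A i).card = ∑ u ∈ B, if i ∈ χ s((0:Fin M), u) then 1 else 0 := by
        intro i; simp only [hAdef]; exact Finset.card_filter _ _
      calc ∑ i, (A i).card
          = ∑ i, ∑ u ∈ B, if i ∈ χ s((0:Fin M), u) then 1 else 0 := by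
            exact Finset.sum_congr rfl fun i _ => h1 i
        _ = ∑ u ∈ B, ∑ i, if i ∈ χ s((0:Fin M), u) then 1 else 0 := Finset.sum_comm
        _ = ∑ u ∈ B, (χ s((0:Fin M), u)).card := by
            refine Finset.sum_congr rfl fun u _ => ?_
            rw [← Finset.card_filter]
            congr 1
            ext j; simp
        _ = ∑ _u ∈ B, s := Finset.sum_congr rfl hedge
        _ = s * (M - 1) := by rw [Finset.sum_const, hBcard, smul_eq_mul, mul_comm]
    have hpig : ∃ i, n i ≤ (A i).card := by
      by_contra h
      push_neg at h
      have hsum : ∑ i, ((A i).card + 1) ≤ ∑ i, n i :=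
        Finset.sum_le_sum fun i _ => h i
      rw [Finset.sum_add_distrib, Finset.sum_const, Finset.card_univ, Fintype.card_fin,
        smul_eq_mul, mul_one, hcount] at hsum
      -- s * (M - 1) + r ≤ ∑ n i, but s * (M-1) = s * c ≥ ∑ n i - r + 1
      have h := hsum
      zify [show 1 ≤ M by omega] at h
      push_cast at h
      have hct : ((c.toNat : ℤ)) = c := Int.toNat_of_nonneg (by omega)
      rw [hMc] at h
      have h2 : (s : ℤ) * c + r ≤ ∑ x, (n x : ℤ) := by linear_combination h
      linarith [hkey, h2]
    obtain ⟨i, hi⟩ := hpig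
    obtain ⟨T, hTA, hTcard⟩ := Finset.exists_subset_card_eq hi
    refine ⟨i, ?_⟩
    have e : Fin (n i) ≃ {x // x ∈ T} := (T.equivFinOfCardEq hTcard).symm
    refine ⟨Sum.elim (fun _ => (0 : Fin M)) (fun k => (e k : Fin M)), ?_, ?_⟩
    · intro u v huv
      have hne : ∀ k : Fin (n i), ((e k : Fin M)) ≠ 0 := by
        intro k
        have hmem : (e k : Fin M) ∈ A i := hTA (e k).2
        rw [hAdef] at hmem
        exact (Finset.mem_erase.mp (Finset.mem_filter.mp hmem).1).1
      cases u with
      | inl u => cases v with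
        | inl v => simp
        | inr v => exact absurd huv.symm (hne v)
      | inr u => cases v with
        | inl v => exact absurd huv (hne u)
        | inr v =>
          simp only [Sum.elim_inr] at huv
          have : e u = e v := Subtype.ext huv
          simpa using e.injective this
    · intro u v hadj
      have hmem : ∀ k : Fin (n i), i ∈ χ s((0 : Fin M), (e k : Fin M)) := by
        intro k
        have hmem : (e k : Fin M) ∈ A i := hTA (e k).2
        rw [hAdef] at hmem
        exact (Finset.mem_filter.mp hmem).2
      cases u with
      | inl u => cases v with
        | inl v => simp at hadj
        | inr v => simpa using hmem v
      | inr u => cases v with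
        | inl v => rw [Sym2.eq_swap]; simpa using hmem u
        | inr v => simp at hadj
  have hle : setRamsey s (fun i => completeBipartiteGraph Unit (Fin (n i))) ≤ M :=
    Nat.sInf_le hprop
  calc (setRamsey s (fun i => completeBipartiteGraph Unit (Fin (n i))) : ℤ)
      ≤ (M : ℤ) := by exact_mod_cast hle
    _ = c + 1 := hMc
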